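/- In the hyperbolic two-circle triangle, the hyperbolic sine law sinh l · sin θ_i = sinh r_j · sin Θ holds, and differentiating with respect to r_i yields sinh r_i · ∂θ_i/∂r_i = −cosh l · sinh r_j · ∂θ_i/∂r_j. -/

import Mathlib

open Real

noncomputable def arcosh (x : ℝ) : ℝ := Real.log (x + Real.sqrt (x ^ 2 - 1))

/-- cosh of the side opposite the apex in the hyperbolic two-circle triangle. -/
noncomputable def hC (Θ ri rj : ℝ) : ℝ :=
  Real.cosh ri * Real.cosh rj + Real.sinh ri * Real.sinh rj * Real.cos Θ

noncomputable def hL (Θ ri rj : ℝ) : ℝ := _root_.arcosh (hC Θ ri rj)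

/-- Inner angle at vertex `i` of the hyperbolic triangle with side lengths `ri, rj`
adjacent to the apex angle `π − Θ`, via the hyperbolic law of cosines. -/
noncomputable def hθi (Θ ri rj : ℝ) : ℝ :=
  Real.arccos ((Real.cosh ri * Real.cosh (hL Θ ri rj) - Real.cosh rj) /
    (Real.sinh ri * Real.sinh (hL Θ ri rj)))

noncomputable def hθj (Θ ri rj : ℝ) : ℝ :=
  Real.arccos ((Real.cosh rj * Real.cosh (hL Θ ri rj) - Real.cosh ri) /
    (Real.sinh rj * Real.sinh (hL Θ ri rj)))

lemma cosh_arcosh {x : ℝ} (hx : 1 ≤ x) : Real.cosh (_root_.arcosh x) = x := by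
  have h1 : 0 ≤ x ^ 2 - 1 := by nlinarith
  have hs : Real.sqrt (x ^ 2 - 1) ^ 2 = x ^ 2 - 1 := Real.sq_sqrt h1
  have hy : 0 < x + Real.sqrt (x ^ 2 - 1) := by
    have := Real.sqrt_nonneg (x ^ 2 - 1); linarith
  have hinv : (x + Real.sqrt (x ^ 2 - 1))⁻¹ = x - Real.sqrt (x ^ 2 - 1) :=
    inv_eq_of_mul_eq_one_right (by nlinarith)
  rw [_root_.arcosh, Real.cosh_eq, Real.exp_log hy, Real.exp_neg, Real.exp_log hy, hinv]
  ring

lemma sinh_arcosh {x : ℝ} (hx : 1 ≤ x) : Real.sinh (_root_.arcosh x) = Real.sqrt (x ^ 2 - 1) := by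
  have h1 : 0 ≤ x ^ 2 - 1 := by nlinarith
  have hs : Real.sqrt (x ^ 2 - 1) ^ 2 = x ^ 2 - 1 := Real.sq_sqrt h1
  have hy : 0 < x + Real.sqrt (x ^ 2 - 1) := by
    have := Real.sqrt_nonneg (x ^ 2 - 1); linarith
  have hinv : (x + Real.sqrt (x ^ 2 - 1))⁻¹ = x - Real.sqrt (x ^ 2 - 1) :=
    inv_eq_of_mul_eq_one_right (by nlinarith)
  rw [_root_.arcosh, Real.sinh_eq, Real.exp_log hy, Real.exp_neg, Real.exp_log hy, hinv]
  ring

lemma sqrt_one_add_div_sq {g k : ℝ} (hk : 0 < k) :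
    Real.sqrt (1 + (g / k) ^ 2) = Real.sqrt (g ^ 2 + k ^ 2) / k := by
  have h : 1 + (g / k) ^ 2 = (g ^ 2 + k ^ 2) / k ^ 2 := by
    field_simp
    ring
  rw [h, Real.sqrt_div (by positivity), Real.sqrt_sq hk.le]

lemma arccos_aux (g : ℝ) {k : ℝ} (hk : 0 < k) :
    Real.arccos (g / Real.sqrt (g ^ 2 + k ^ 2)) = π / 2 - Real.arctan (g / k) := by
  rw [Real.arccos_eq_pi_div_two_sub_arcsin, Real.arctan_eq_arcsin]
  congr 2
  rw [sqrt_one_add_div_sq hk]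
  have hgk : 0 < Real.sqrt (g ^ 2 + k ^ 2) := Real.sqrt_pos.2 (by positivity)
  field_simp


lemma hC_gt_one {Θ rj x : ℝ} (hrj : 0 < rj) (hΘ1 : 0 < Θ) (hΘ2 : Θ < π) (hx : 0 < x) :
    1 < hC Θ x rj := by
  have hcos : -1 < Real.cos Θ := by
    have := Real.cos_lt_cos_of_nonneg_of_le_pi hΘ1.le le_rfl hΘ2
    simpa [Real.cos_pi] using this
  have h1 : 1 ≤ Real.cosh (x - rj) := Real.one_le_cosh _
  have h2 : Real.cosh (x - rj) = Real.cosh x * Real.cosh rj - Real.sinh x * Real.sinh rj :=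
    Real.cosh_sub x rj
  have h3 : 0 < Real.sinh x * Real.sinh rj :=
    mul_pos (Real.sinh_pos_iff.2 hx) (Real.sinh_pos_iff.2 hrj)
  unfold hC
  nlinarith

lemma hsq_aux (Θ x rj : ℝ) :
    (hC Θ x rj) ^ 2 - 1 =
      (Real.sinh x * Real.cosh rj + Real.cosh x * Real.sinh rj * Real.cos Θ) ^ 2 +
        (Real.sinh rj * Real.sin Θ) ^ 2 := by
  unfold hC
  linear_combination (Real.cosh rj ^ 2 - Real.sinh rj ^ 2 * Real.cos Θ ^ 2) * Real.cosh_sq x +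
    Real.cosh_sq rj - Real.sinh rj ^ 2 * Real.sin_sq_add_cos_sq Θ

lemma hθi_formula {Θ rj : ℝ} (hrj : 0 < rj) (hΘ1 : 0 < Θ) (hΘ2 : Θ < π) {x : ℝ} (hx : 0 < x) :
    hθi Θ x rj = π / 2 - Real.arctan
      ((Real.sinh x * Real.cosh rj + Real.cosh x * Real.sinh rj * Real.cos Θ) /
        (Real.sinh rj * Real.sin Θ)) := by
  have hC1 : 1 < hC Θ x rj := hC_gt_one hrj hΘ1 hΘ2 hx
  have hk : 0 < Real.sinh rj * Real.sin Θ :=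
    mul_pos (Real.sinh_pos_iff.2 hrj) (Real.sin_pos_of_pos_of_lt_pi hΘ1 hΘ2)
  have hnum : Real.cosh x * hC Θ x rj - Real.cosh rj =
      Real.sinh x * (Real.sinh x * Real.cosh rj + Real.cosh x * Real.sinh rj * Real.cos Θ) := by
    unfold hC; linear_combination Real.cosh rj * Real.cosh_sq x
  rw [hθi, hL, _root_.cosh_arcosh hC1.le, _root_.sinh_arcosh hC1.le, hsq_aux, hnum,
    mul_div_mul_left _ _ (Real.sinh_pos_iff.2 hx).ne']
  exact arccos_aux _ hk

theorem hyperbolic_sine_law_and_derivative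
    (ri rj Θ : ℝ) (hri : 0 < ri) (hrj : 0 < rj)
    (hΘ : Θ ∈ Set.Ioo 0 π) :
    Real.sinh (hL Θ ri rj) * Real.sin (hθi Θ ri rj) = Real.sinh rj * Real.sin Θ ∧
    Real.sinh ri * deriv (fun x => hθi Θ x rj) ri =
      -Real.cosh (hL Θ ri rj) * (Real.sinh rj * deriv (fun y => hθi Θ ri y) rj) := by
  obtain ⟨hΘ1, hΘ2⟩ := hΘ
  have hk : 0 < Real.sinh rj * Real.sin Θ :=
    mul_pos (Real.sinh_pos_iff.2 hrj) (Real.sin_pos_of_pos_of_lt_pi hΘ1 hΘ2)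
  have hC1 : 1 < hC Θ ri rj := hC_gt_one hrj hΘ1 hΘ2 hri
  set g : ℝ := Real.sinh ri * Real.cosh rj + Real.cosh ri * Real.sinh rj * Real.cos Θ with hg
  set k : ℝ := Real.sinh rj * Real.sin Θ with hkdef
  have hsinhL : Real.sinh (hL Θ ri rj) = Real.sqrt (g ^ 2 + k ^ 2) := by
    rw [hL, _root_.sinh_arcosh hC1.le, hsq_aux]
  have hcoshL : Real.cosh (hL Θ ri rj) = hC Θ ri rj := by
    rw [hL, _root_.cosh_arcosh hC1.le]
  have hgkpos : 0 < Real.sqrt (g ^ 2 + k ^ 2) := Real.sqrt_pos.2 (by positivity)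
  constructor
  · rw [hθi_formula hrj hΘ1 hΘ2 hri, Real.sin_pi_div_two_sub, Real.cos_arctan, hsinhL,
      sqrt_one_add_div_sq hk]
    field_simp
    rfl
  · -- derivative in ri
    have hdi : deriv (fun x => hθi Θ x rj) ri =
        -(1 / (1 + (g / k) ^ 2) * (hC Θ ri rj / k)) := by
      have hEq : (fun x => hθi Θ x rj) =ᶠ[nhds ri] fun x =>
          π / 2 - Real.arctan
            ((Real.sinh x * Real.cosh rj + Real.cosh x * Real.sinh rj * Real.cos Θ) / k) := by
        filter_upwards [Ioi_mem_nhds hri] with x hx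
        exact hθi_formula hrj hΘ1 hΘ2 hx
      rw [hEq.deriv_eq]
      have hgd : HasDerivAt
          (fun x => Real.sinh x * Real.cosh rj + Real.cosh x * Real.sinh rj * Real.cos Θ)
          (Real.cosh ri * Real.cosh rj + Real.sinh ri * (Real.sinh rj * Real.cos Θ)) ri := by
        have h1 := (Real.hasDerivAt_sinh ri).mul_const (Real.cosh rj)
        have h2 := (Real.hasDerivAt_cosh ri).mul_const (Real.sinh rj * Real.cos Θ)
        have h := h1.fun_add h2
        simp only [mul_assoc] at h ⊢
        exact h
      have hq : HasDerivAt (fun x =>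
          (Real.sinh x * Real.cosh rj + Real.cosh x * Real.sinh rj * Real.cos Θ) / k)
          ((Real.cosh ri * Real.cosh rj + Real.sinh ri * (Real.sinh rj * Real.cos Θ)) / k) ri :=
        hgd.div_const k
      have harc : HasDerivAt (fun x => Real.arctan
          ((Real.sinh x * Real.cosh rj + Real.cosh x * Real.sinh rj * Real.cos Θ) / k))
          (1 / (1 + (g / k) ^ 2) * ((Real.cosh ri * Real.cosh rj +
            Real.sinh ri * (Real.sinh rj * Real.cos Θ)) / k)) ri :=
        by have := (Real.hasDerivAt_arctan (g / k)).comp ri hq; exact this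
      rw [(harc.const_sub (π / 2)).deriv]
      unfold hC
      ring
    -- derivative in rj
    have hdj : deriv (fun y => hθi Θ ri y) rj =
        -(1 / (1 + (g / k) ^ 2) *
          (((Real.sinh ri * Real.sinh rj + Real.cosh ri * (Real.cosh rj * Real.cos Θ)) * k -
              g * (Real.cosh rj * Real.sin Θ)) / k ^ 2)) := by
      have hEq : (fun y => hθi Θ ri y) =ᶠ[nhds rj] fun y =>
          π / 2 - Real.arctan
            ((Real.sinh ri * Real.cosh y + Real.cosh ri * Real.sinh y * Real.cos Θ) /
              (Real.sinh y * Real.sin Θ)) := by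
        filter_upwards [Ioi_mem_nhds hrj] with y hy
        exact hθi_formula hy hΘ1 hΘ2 hri
      rw [hEq.deriv_eq]
      have hg2 : HasDerivAt
          (fun y => Real.sinh ri * Real.cosh y + Real.cosh ri * Real.sinh y * Real.cos Θ)
          (Real.sinh ri * Real.sinh rj + Real.cosh ri * (Real.cosh rj * Real.cos Θ)) rj := by
        have h1 := (Real.hasDerivAt_cosh rj).const_mul (Real.sinh ri)
        have h2 := ((Real.hasDerivAt_sinh rj).const_mul (Real.cosh ri)).mul_const (Real.cos Θ)
        have h := h1.fun_add h2
        simp only [mul_assoc] at h ⊢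
        exact h
      have hk2 : HasDerivAt (fun y => Real.sinh y * Real.sin Θ) (Real.cosh rj * Real.sin Θ) rj :=
        (Real.hasDerivAt_sinh rj).mul_const (Real.sin Θ)
      have hq := hg2.div hk2 hk.ne'
      have harc : HasDerivAt (fun y => Real.arctan
          ((Real.sinh ri * Real.cosh y + Real.cosh ri * Real.sinh y * Real.cos Θ) /
            (Real.sinh y * Real.sin Θ)))
          (1 / (1 + (g / k) ^ 2) *
            (((Real.sinh ri * Real.sinh rj + Real.cosh ri * (Real.cosh rj * Real.cos Θ)) * k -
              g * (Real.cosh rj * Real.sin Θ)) / k ^ 2)) rj :=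
        by have := (Real.hasDerivAt_arctan (g / k)).comp rj hq; exact this
      exact (harc.const_sub (π / 2)).deriv
    rw [hdi, hdj, hcoshL]
    have hN : (Real.sinh ri * Real.sinh rj + Real.cosh ri * (Real.cosh rj * Real.cos Θ)) * k -
        g * (Real.cosh rj * Real.sin Θ) = -(Real.sinh ri * Real.sin Θ) := by
      rw [hg, hkdef]
      linear_combination (-Real.sin Θ * Real.sinh ri) * Real.cosh_sq rj
    rw [hN, hkdef]
    have h1 : (1 : ℝ) + (g / k) ^ 2 ≠ 0 := by positivity
    field_simp
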